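/- For a node x in the Koch network K_g with label {0, i_1, …, i_n}, the sum of shortest-path distances from x to all nodes equals d_x(g) = (g+2)·4^g + 2n·4^g − Σ_{k=1}^{n} 2·4^{g−i_k}. -/

import Mathlib

open Matrix BigOperators

/-- The triangles of the Koch network `K_g`: the initial triangle, plus, at each
iteration, one new triangle for each corner node of each existing triangle. -/
def KochT : ℕ → Type
  | 0 => Unit
  | g + 1 => KochT g ⊕ (KochT g × Fin 3)

/-- The vertices of the Koch network `K_g`: at each iteration, each corner node of
each existing triangle spawns two new vertices. -/
def KochV : ℕ → Type
  | 0 => Fin 3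
  | g + 1 => KochV g ⊕ (KochT g × Fin 3 × Fin 2)

instance kochTFintype : ∀ g, Fintype (KochT g)
  | 0 => inferInstanceAs (Fintype Unit)
  | g + 1 =>
    letI := kochTFintype g
    inferInstanceAs (Fintype (KochT g ⊕ (KochT g × Fin 3)))

instance kochVFintype : ∀ g, Fintype (KochV g)
  | 0 => inferInstanceAs (Fintype (Fin 3))
  | g + 1 =>
    letI := kochVFintype g
    letI := kochTFintype g
    inferInstanceAs (Fintype (KochV g ⊕ (KochT g × Fin 3 × Fin 2)))

instance kochTDecEq : ∀ g, DecidableEq (KochT g)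
  | 0 => inferInstanceAs (DecidableEq Unit)
  | g + 1 =>
    letI := kochTDecEq g
    inferInstanceAs (DecidableEq (KochT g ⊕ (KochT g × Fin 3)))

instance kochVDecEq : ∀ g, DecidableEq (KochV g)
  | 0 => inferInstanceAs (DecidableEq (Fin 3))
  | g + 1 =>
    letI := kochVDecEq g
    letI := kochTDecEq g
    inferInstanceAs (DecidableEq (KochV g ⊕ (KochT g × Fin 3 × Fin 2)))

/-- The three corners of a triangle of `K_g`.  For a triangle created at some
iteration and attached to corner `i` of triangle `t`, corner `0` is the mother node
(corner `i` of `t`) and corners `1`, `2` are the two newly created nodes. -/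
def kochCorner : ∀ g, KochT g → Fin 3 → KochV g
  | 0, _, c => c
  | g + 1, Sum.inl t, c => Sum.inl (kochCorner g t c)
  | g + 1, Sum.inr (t, i), c =>
    if c = 0 then Sum.inl (kochCorner g t i)
    else if c = 1 then Sum.inr (t, i, 0) else Sum.inr (t, i, 1)

/-- The Koch network `K_g` as a simple graph: two vertices are adjacent iff they
are distinct corners of a common triangle. -/
def kochGraph (g : ℕ) : SimpleGraph (KochV g) :=
  SimpleGraph.fromRel (fun x y => ∃ (t : KochT g) (c c' : Fin 3),
    c ≠ c' ∧ x = kochCorner g t c ∧ y = kochCorner g t c')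

/-- The level of a node of `K_g`: the iteration at which it was created.  The three
initial nodes (the hubs) are at level `0`. -/
def kochLevel : ∀ g, KochV g → ℕ
  | 0, _ => 0
  | g + 1, Sum.inl x => kochLevel g x
  | g + 1, Sum.inr _ => g + 1

/-- The parent (mother node) of a node of `K_g`; the hubs have no parent. -/
def kochParent : ∀ g, KochV g → Option (KochV g)
  | 0, _ => none
  | g + 1, Sum.inl x => (kochParent g x).map Sum.inl
  | g + 1, Sum.inr (t, i, _) => some (Sum.inl (kochCorner g t i))

/-- The label `{0, i_1, …, i_n}` of a node of `K_g`: the increasing list of levels of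
the nodes on the unique shortest path from the nearest hub to the node.  A hub has
label `[0]`; a node created at iteration `g+1` appends `g+1` to its mother's label. -/
def kochLabel : ∀ g, KochV g → List ℕ
  | 0, _ => [0]
  | g + 1, Sum.inl x => kochLabel g x
  | g + 1, Sum.inr (t, i, _) => kochLabel g (kochCorner g t i) ++ [g + 1]

/-- The all-ones matrix `J`. -/
def JMat (V : Type*) : Matrix V V ℝ := Matrix.of fun _ _ => (1 : ℝ)

/-- The Laplacian matrix (over `ℝ`) of a simple graph (all edge weights `1`). -/
noncomputable def glap {V : Type*} [Fintype V] (G : SimpleGraph V) : Matrix V V ℝ := by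
  classical exact SimpleGraph.lapMatrix ℝ G

/-- The pseudoinverse `L† = (L + (1/N)·J)⁻¹ - (1/N)·J` of the graph Laplacian. -/
noncomputable def gdag {V : Type*} [Fintype V] [DecidableEq V] (G : SimpleGraph V) : Matrix V V ℝ :=
  (glap G + ((Fintype.card V : ℝ))⁻¹ • JMat V)⁻¹ - ((Fintype.card V : ℝ))⁻¹ • JMat V

/-- The resistance distance `r_{xy} = L†_{xx} + L†_{yy} - 2 L†_{xy}`. -/
noncomputable def gres {V : Type*} [Fintype V] [DecidableEq V] (G : SimpleGraph V) (x y : V) : ℝ :=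
  gdag G x x + gdag G y y - 2 * gdag G x y
namespace KochAux

open SimpleGraph

/-- Explicit distance function on the Koch network. -/
def D : ∀ g, KochV g → KochV g → ℕ
  | 0, x, y => if x = y then 0 else 1
  | g+1, Sum.inl x, Sum.inl y => D g x y
  | g+1, Sum.inl x, Sum.inr (t, i, _) => D g x (kochCorner g t i) + 1
  | g+1, Sum.inr (t, i, _), Sum.inl y => D g (kochCorner g t i) y + 1
  | g+1, Sum.inr (t, i, j), Sum.inr (t', i', j') =>
    if (t, i) = (t', i') then (if j = j' then 0 else 1)
    else D g (kochCorner g t i) (kochCorner g t' i') + 2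

lemma D_self : ∀ g (x : KochV g), D g x x = 0
  | 0, x => by simp [D]
  | g+1, Sum.inl x => D_self g x
  | g+1, Sum.inr (t, i, j) => by simp [D]

lemma corner_inl (g : ℕ) (t : KochT g) (c : Fin 3) :
    kochCorner (g+1) (Sum.inl t) c = Sum.inl (kochCorner g t c) := rfl

lemma adj_inl {g : ℕ} {a b : KochV g} (h : (kochGraph g).Adj a b) :
    (kochGraph (g+1)).Adj (Sum.inl a) (Sum.inl b) := by
  rw [kochGraph, SimpleGraph.fromRel_adj] at h; rw [kochGraph]; refine (SimpleGraph.fromRel_adj _ _ _).2 ?_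
  obtain ⟨hne, h | h⟩ := h <;>
    obtain ⟨t, c, c', hcc, rfl, rfl⟩ := h
  · exact ⟨fun hh => hne (Sum.inl.inj hh), Or.inl ⟨Sum.inl t, c, c', hcc, rfl, rfl⟩⟩
  · exact ⟨fun hh => hne (Sum.inl.inj hh), Or.inr ⟨Sum.inl t, c, c', hcc, rfl, rfl⟩⟩

lemma adj_mother {g : ℕ} (t : KochT g) (i : Fin 3) (j : Fin 2) :
    (kochGraph (g+1)).Adj (Sum.inl (kochCorner g t i)) (Sum.inr (t, i, j)) := by
  rw [kochGraph]; refine (SimpleGraph.fromRel_adj _ _ _).2 ?_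
  refine ⟨fun hh => Sum.inl_ne_inr hh,
    Or.inl ⟨Sum.inr (t, i), 0, if j = 0 then 1 else 2, ?_, ?_, ?_⟩⟩
  · fin_cases j <;> decide
  · simp [kochCorner] <;> rfl
  · fin_cases j <;> simp [kochCorner] <;> rfl

lemma adj_sib {g : ℕ} (t : KochT g) (i : Fin 3) {j j' : Fin 2} (h : j ≠ j') :
    (kochGraph (g+1)).Adj (Sum.inr (t, i, j)) (Sum.inr (t, i, j')) := by
  rw [kochGraph]; refine (SimpleGraph.fromRel_adj _ _ _).2 ?_
  have hj : (j = 0 ∧ j' = 1) ∨ (j = 1 ∧ j' = 0) := by omega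
  refine ⟨fun hh => h ?_, Or.inl ⟨Sum.inr (t, i), if j = 0 then 1 else 2,
    if j' = 0 then 1 else 2, ?_, ?_, ?_⟩⟩
  · have := Sum.inr.inj hh; exact (Prod.ext_iff.1 (Prod.ext_iff.1 this).2).2
  · rcases hj with ⟨rfl, rfl⟩ | ⟨rfl, rfl⟩ <;> decide
  · rcases hj with ⟨rfl, rfl⟩ | ⟨rfl, rfl⟩ <;> simp [kochCorner] <;> rfl
  · rcases hj with ⟨rfl, rfl⟩ | ⟨rfl, rfl⟩ <;> simp [kochCorner] <;> rfl

/-- Case analysis for adjacency in `K_{g+1}`. -/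
lemma adj_cases {g : ℕ} {x z : KochV (g+1)} (h : (kochGraph (g+1)).Adj x z) :
    (∃ a b, x = Sum.inl a ∧ z = Sum.inl b ∧ (kochGraph g).Adj a b) ∨
    (∃ t i j, x = Sum.inl (kochCorner g t i) ∧ z = Sum.inr (t, i, j)) ∨
    (∃ t i j, x = Sum.inr (t, i, j) ∧ z = Sum.inl (kochCorner g t i)) ∨
    (∃ t i j j', j ≠ j' ∧ x = Sum.inr (t, i, j) ∧ z = Sum.inr (t, i, j')) := by
  rw [kochGraph, SimpleGraph.fromRel_adj] at h
  obtain ⟨hne, h | h⟩ := h <;> obtain ⟨t, c, c', hcc, rfl, rfl⟩ := h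
  · cases t with
    | inl t =>
        refine Or.inl ⟨_, _, rfl, rfl, ?_⟩
        rw [kochGraph, SimpleGraph.fromRel_adj]
        exact ⟨fun hh => hne (by rw [corner_inl, corner_inl, hh]),
          Or.inl ⟨t, c, c', hcc, rfl, rfl⟩⟩
    | inr ti =>
        obtain ⟨t, i⟩ := ti
        fin_cases c <;> fin_cases c' <;>
        first
          | exact absurd rfl hcc
          | exact Or.inr (Or.inl ⟨t, i, 0, rfl, rfl⟩)
          | exact Or.inr (Or.inl ⟨t, i, 1, rfl, rfl⟩)
          | exact Or.inr (Or.inr (Or.inl ⟨t, i, 0, rfl, rfl⟩))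
          | exact Or.inr (Or.inr (Or.inl ⟨t, i, 1, rfl, rfl⟩))
          | exact Or.inr (Or.inr (Or.inr ⟨t, i, 0, 1, by decide, rfl, rfl⟩))
          | exact Or.inr (Or.inr (Or.inr ⟨t, i, 1, 0, by decide, rfl, rfl⟩))
  · cases t with
    | inl t =>
        refine Or.inl ⟨_, _, rfl, rfl, ?_⟩
        rw [kochGraph, SimpleGraph.fromRel_adj]
        exact ⟨fun hh => hne (by rw [corner_inl, corner_inl, hh]),
          Or.inr ⟨t, c, c', hcc, rfl, rfl⟩⟩
    | inr ti =>
        obtain ⟨t, i⟩ := ti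
        fin_cases c <;> fin_cases c' <;>
        first
          | exact absurd rfl hcc
          | exact Or.inr (Or.inl ⟨t, i, 0, rfl, rfl⟩)
          | exact Or.inr (Or.inl ⟨t, i, 1, rfl, rfl⟩)
          | exact Or.inr (Or.inr (Or.inl ⟨t, i, 0, rfl, rfl⟩))
          | exact Or.inr (Or.inr (Or.inl ⟨t, i, 1, rfl, rfl⟩))
          | exact Or.inr (Or.inr (Or.inr ⟨t, i, 0, 1, by decide, rfl, rfl⟩))
          | exact Or.inr (Or.inr (Or.inr ⟨t, i, 1, 0, by decide, rfl, rfl⟩))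

end KochAux
namespace KochAux

open SimpleGraph

/-- `D` decreases by at most 1 along an edge. -/
lemma D_lip : ∀ g (x z y : KochV g), (kochGraph g).Adj x z → D g x y ≤ D g z y + 1
  | 0, x, z, y, _ => by
    by_cases h : x = y <;> simp [D, h]
  | g+1, x, z, y, h => by
    rcases adj_cases h with ⟨a, b, rfl, rfl, hab⟩ | ⟨t, i, j, rfl, rfl⟩ |
      ⟨t, i, j, rfl, rfl⟩ | ⟨t, i, j, j', hjj, rfl, rfl⟩
    · cases y with
      | inl c => exact D_lip g a b c hab
      | inr p =>
          obtain ⟨t, i, jj⟩ := p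
          simpa [D] using D_lip g a b (kochCorner g t i) hab
    · cases y with
      | inl c => simp [D]; omega
      | inr p =>
          obtain ⟨t', i', j'⟩ := p
          by_cases hti : (t, i) = (t', i')
          · obtain ⟨rfl, rfl⟩ := Prod.mk.injEq .. ▸ hti
            have h1 : D (g+1) (Sum.inl (kochCorner g t i)) (Sum.inr (t, i, j')) =
                D g (kochCorner g t i) (kochCorner g t i) + 1 := rfl
            have h2 : D (g+1) (Sum.inr (t, i, j)) (Sum.inr (t, i, j')) =
                if j = j' then 0 else 1 := by simp [D]
            rw [h1, h2, D_self]
            split <;> omega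
          · have h1 : D (g+1) (Sum.inl (kochCorner g t i)) (Sum.inr (t', i', j')) =
                D g (kochCorner g t i) (kochCorner g t' i') + 1 := rfl
            have h2 : D (g+1) (Sum.inr (t, i, j)) (Sum.inr (t', i', j')) =
                D g (kochCorner g t i) (kochCorner g t' i') + 2 := by
              simp [D, hti]
            rw [h1, h2]; omega
    · cases y with
      | inl c => simp [D]
      | inr p =>
          obtain ⟨t', i', j'⟩ := p
          by_cases hti : (t, i) = (t', i')
          · obtain ⟨rfl, rfl⟩ := Prod.mk.injEq .. ▸ hti
            have h1 : D (g+1) (Sum.inr (t, i, j)) (Sum.inr (t, i, j')) =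
                if j = j' then 0 else 1 := by simp [D]
            have h2 : D (g+1) (Sum.inl (kochCorner g t i)) (Sum.inr (t, i, j')) =
                D g (kochCorner g t i) (kochCorner g t i) + 1 := rfl
            rw [h1, h2, D_self]
            split <;> omega
          · have h1 : D (g+1) (Sum.inr (t, i, j)) (Sum.inr (t', i', j')) =
                D g (kochCorner g t i) (kochCorner g t' i') + 2 := by simp [D, hti]
            have h2 : D (g+1) (Sum.inl (kochCorner g t i)) (Sum.inr (t', i', j')) =
                D g (kochCorner g t i) (kochCorner g t' i') + 1 := rfl
            rw [h1, h2]
    · cases y with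
      | inl c => simp [D]
      | inr p =>
          obtain ⟨t', i', j''⟩ := p
          by_cases hti : (t, i) = (t', i')
          · obtain ⟨rfl, rfl⟩ := Prod.mk.injEq .. ▸ hti
            have h1 : D (g+1) (Sum.inr (t, i, j)) (Sum.inr (t, i, j'')) =
                if j = j'' then 0 else 1 := by simp [D]
            have h2 : D (g+1) (Sum.inr (t, i, j')) (Sum.inr (t, i, j'')) =
                if j' = j'' then 0 else 1 := by simp [D]
            rw [h1, h2]
            split <;> split <;> omega
          · have h1 : D (g+1) (Sum.inr (t, i, j)) (Sum.inr (t', i', j'')) =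
                D g (kochCorner g t i) (kochCorner g t' i') + 2 := by simp [D, hti]
            have h2 : D (g+1) (Sum.inr (t, i, j')) (Sum.inr (t', i', j'')) =
                D g (kochCorner g t i) (kochCorner g t' i') + 2 := by simp [D, hti]
            rw [h1, h2]
            omega

lemma D_le_walk {g : ℕ} : ∀ {x y : KochV g} (w : (kochGraph g).Walk x y),
    D g x y ≤ w.length := by
  intro x y w
  induction w with
  | nil => simp [D_self]
  | cons h p ih =>
      calc D g _ _ ≤ D g _ _ + 1 := D_lip g _ _ _ h
      _ ≤ p.length + 1 := by omega

/-- The graph homomorphism `K_g → K_{g+1}`. -/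
def homInl (g : ℕ) : kochGraph g →g kochGraph (g+1) where
  toFun := Sum.inl
  map_rel' := adj_inl

lemma exists_walk : ∀ g (x y : KochV g), ∃ w : (kochGraph g).Walk x y, w.length = D g x y
  | 0, x, y => by
    by_cases h : x = y
    · subst h; exact ⟨Walk.nil, by simp [D]⟩
    · have hadj : (kochGraph 0).Adj x y := by
        rw [kochGraph, SimpleGraph.fromRel_adj]
        exact ⟨h, Or.inl ⟨(), x, y, h, rfl, rfl⟩⟩
      exact ⟨Walk.cons hadj Walk.nil, by simp [D, h]⟩
  | g+1, Sum.inl x, Sum.inl y => by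
    obtain ⟨w, hw⟩ := exists_walk g x y
    exact ⟨w.map (homInl g), by simp [Walk.length_map, hw, D]; exact (Walk.length_map _ _).trans hw⟩
  | g+1, Sum.inl x, Sum.inr (t, i, j) => by
    obtain ⟨w, hw⟩ := exists_walk g x (kochCorner g t i)
    refine ⟨(w.map (homInl g)).concat (adj_mother t i j), ?_⟩
    simp [Walk.length_concat, Walk.length_map, hw, D]
    exact (Walk.length_concat _ _).trans (congrArg (· + 1) ((Walk.length_map _ _).trans hw))
  | g+1, Sum.inr (t, i, j), Sum.inl y => by
    obtain ⟨w, hw⟩ := exists_walk g (kochCorner g t i) y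
    refine ⟨Walk.cons ((adj_mother t i j).symm) (w.map (homInl g)), ?_⟩
    simp [Walk.length_map, hw, D]
    exact (Walk.length_cons _ _).trans (congrArg (· + 1) ((Walk.length_map _ _).trans hw))
  | g+1, Sum.inr (t, i, j), Sum.inr (t', i', j') => by
    by_cases hti : (t, i) = (t', i')
    · obtain ⟨rfl, rfl⟩ := Prod.mk.injEq .. ▸ hti
      by_cases hj : j = j'
      · subst hj; exact ⟨Walk.nil, by simp [D]; rfl⟩
      · exact ⟨Walk.cons (adj_sib t i hj) Walk.nil, by simp [D, hj]; rfl⟩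
    · obtain ⟨w, hw⟩ := exists_walk g (kochCorner g t i) (kochCorner g t' i')
      refine ⟨Walk.cons ((adj_mother t i j).symm)
        ((w.map (homInl g)).concat (adj_mother t' i' j')), ?_⟩
      simp [Walk.length_concat, Walk.length_map, hw, D, hti]
      exact (Walk.length_cons _ _).trans (congrArg (· + 1) ((Walk.length_concat _ _).trans
        (congrArg (· + 1) ((Walk.length_map _ _).trans hw))))

lemma dist_eq_D (g : ℕ) (x y : KochV g) : (kochGraph g).dist x y = D g x y := by
  obtain ⟨w, hw⟩ := exists_walk g x y
  refine le_antisymm (hw ▸ SimpleGraph.dist_le w) ?_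
  obtain ⟨w', hw'⟩ := (Walk.reachable w).exists_walk_length_eq_dist
  exact hw' ▸ D_le_walk w'

end KochAux
namespace KochAux

open SimpleGraph Finset

lemma sumV (g : ℕ) (f : KochV (g+1) → ℕ) :
    ∑ v : KochV (g+1), f v =
      (∑ x : KochV g, f (Sum.inl x)) + ∑ p : KochT g × Fin 3 × Fin 2, f (Sum.inr p) :=
  Fintype.sum_sum_type f

lemma sumT (g : ℕ) (f : KochT (g+1) → ℕ) :
    ∑ t : KochT (g+1), f t =
      (∑ t : KochT g, f (Sum.inl t)) + ∑ p : KochT g × Fin 3, f (Sum.inr p) :=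
  Fintype.sum_sum_type f

lemma cardT : ∀ g, Fintype.card (KochT g) = 4 ^ g
  | 0 => rfl
  | g + 1 => by
    have h : Fintype.card (KochT (g+1)) = Fintype.card (KochT g ⊕ (KochT g × Fin 3)) := rfl
    rw [h, Fintype.card_sum, Fintype.card_prod, Fintype.card_fin, cardT g]
    ring

lemma sum_prod_assoc {α β γ : Type*} [Fintype α] [Fintype β] [Fintype γ]
    (f : α → β → γ → ℕ) :
    ∑ p : α × β × γ, f p.1 p.2.1 p.2.2 = ∑ q : α × β, ∑ c : γ, f q.1 q.2 c := by
  rw [Fintype.sum_prod_type, Fintype.sum_prod_type]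
  exact Finset.sum_congr rfl fun a _ => Fintype.sum_prod_type _

lemma label_ne_nil : ∀ g (x : KochV g), kochLabel g x ≠ []
  | 0, x => by simp [kochLabel]
  | g+1, Sum.inl x => label_ne_nil g x
  | g+1, Sum.inr (t, i, j) => by simp [kochLabel]

lemma label_mem_le : ∀ g (x : KochV g) (i : ℕ), i ∈ kochLabel g x → i ≤ g
  | 0, x, i, h => by simpa [kochLabel] using h
  | g+1, Sum.inl x, i, h => le_trans (label_mem_le g x i h) (by omega)
  | g+1, Sum.inr (t, c, j), i, h => by
    rcases List.mem_append.1 h with h | h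
    · exact le_trans (label_mem_le g _ i h) (by omega)
    · simp at h; omega

/-- abbreviation for the label-exponent sum. -/
def E (g : ℕ) (x : KochV g) : ℕ := ((kochLabel g x).tail.map (fun i => 4 ^ (g - i))).sum

def nl (g : ℕ) (x : KochV g) : ℕ := (kochLabel g x).tail.length

lemma E_inl (g : ℕ) (x : KochV g) : E (g+1) (Sum.inl x) = 4 * E g x := by
  have hlab : kochLabel (g+1) (Sum.inl x) = kochLabel g x := rfl
  delta E
  rw [hlab, ← List.sum_map_mul_left]
  refine congrArg _ (List.map_congr_left fun i hi => ?_)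
  have hle : i ≤ g := label_mem_le g x i (List.mem_of_mem_tail hi)
  rw [show g + 1 - i = (g - i) + 1 by omega, pow_succ]
  ring

lemma nl_inl (g : ℕ) (x : KochV g) : nl (g+1) (Sum.inl x) = nl g x := rfl

lemma tail_inr (g : ℕ) (t : KochT g) (i : Fin 3) (j : Fin 2) :
    (kochLabel (g+1) (Sum.inr (t, i, j))).tail =
      (kochLabel g (kochCorner g t i)).tail ++ [g+1] := by
  have hlab : kochLabel (g+1) (Sum.inr (t, i, j)) =
      kochLabel g (kochCorner g t i) ++ [g+1] := rfl
  rw [hlab, List.tail_append_singleton_of_ne_nil (label_ne_nil g _)]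

lemma E_inr (g : ℕ) (t : KochT g) (i : Fin 3) (j : Fin 2) :
    E (g+1) (Sum.inr (t, i, j)) = 4 * E g (kochCorner g t i) + 1 := by
  rw [show E (g+1) (Sum.inr (t, i, j)) = ((kochLabel (g+1) (Sum.inr (t, i, j))).tail.map
      (fun i => 4 ^ (g + 1 - i))).sum from rfl, tail_inr g t i j, List.map_append,
    List.sum_append, ← E_inl g (kochCorner g t i)]
  delta E
  have hlab : kochLabel (g+1) (Sum.inl (kochCorner g t i)) = kochLabel g (kochCorner g t i) := rfl
  rw [hlab]
  simp

lemma nl_inr (g : ℕ) (t : KochT g) (i : Fin 3) (j : Fin 2) :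
    nl (g+1) (Sum.inr (t, i, j)) = nl g (kochCorner g t i) + 1 := by
  delta nl
  rw [tail_inr g t i j, List.length_append, List.length_singleton]

lemma pair_sum {α : Type*} [Fintype α] [DecidableEq α] (W : α → ℕ) (a0 : α)
    (hW : W a0 = 0) (F : α → ℕ) (hF : ∀ a, F a = if a0 = a then 1 else W a + 4) :
    (∑ a, F a) + 3 = ∑ a, (W a + 4) := by
  rw [← Finset.add_sum_erase _ F (Finset.mem_univ a0),
    ← Finset.add_sum_erase _ (fun a => W a + 4) (Finset.mem_univ a0), hF, if_pos rfl, hW]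
  have h : ∑ a ∈ Finset.univ.erase a0, F a = ∑ a ∈ Finset.univ.erase a0, (W a + 4) :=
    Finset.sum_congr rfl fun a ha => by
      rw [hF, if_neg (Ne.symm (Finset.ne_of_mem_erase ha))]
  omega

end KochAux
namespace KochAux

open SimpleGraph Finset

lemma cardV : ∀ g, Fintype.card (KochV g) = 2 * 4 ^ g + 1
  | 0 => rfl
  | g + 1 => by
    have h : Fintype.card (KochV (g+1)) =
        Fintype.card (KochV g ⊕ (KochT g × Fin 3 × Fin 2)) := rfl
    rw [h, Fintype.card_sum, Fintype.card_prod, Fintype.card_prod, Fintype.card_fin,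
      Fintype.card_fin, cardV g, cardT g]
    ring

theorem main : ∀ g (x : KochV g),
    (∑ y : KochV g, D g x y) + 2 * E g x = (g + 2 + 2 * nl g x) * 4 ^ g ∧
    2 * (∑ q : KochT g × Fin 3, D g x (kochCorner g q.1 q.2)) + 6 * E g x
      = (3 * g + 4 + 6 * nl g x) * 4 ^ g
  | 0, x => by revert x; decide
  | g+1, Sum.inl x => by
    obtain ⟨ih1, ih2⟩ := main g x
    have hV : ∑ y : KochV (g+1), D (g+1) (Sum.inl x) y
        = (∑ y : KochV g, D g x y)
          + ∑ p : KochT g × Fin 3 × Fin 2, (D g x (kochCorner g p.1 p.2.1) + 1) := by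
      rw [sumV]
      congr 1
    have hP : ∑ p : KochT g × Fin 3 × Fin 2, (D g x (kochCorner g p.1 p.2.1) + 1)
        = 2 * (∑ q : KochT g × Fin 3, D g x (kochCorner g q.1 q.2)) + 6 * 4 ^ g := by
      rw [sum_prod_assoc (fun t i _ => D g x (kochCorner g t i) + 1)]
      have h2 : ∀ q : KochT g × Fin 3,
          ∑ _c : Fin 2, (D g x (kochCorner g q.1 q.2) + 1)
            = 2 * D g x (kochCorner g q.1 q.2) + 2 := by
        intro q; rw [Finset.sum_const, Finset.card_univ, Fintype.card_fin, smul_eq_mul]; ring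
      rw [Finset.sum_congr rfl fun q _ => h2 q, Finset.sum_add_distrib, ← Finset.mul_sum,
        Finset.sum_const, Finset.card_univ, Fintype.card_prod, cardT, Fintype.card_fin,
        smul_eq_mul]
      ring
    have hSt : ∑ q : KochT (g+1) × Fin 3,
          D (g+1) (Sum.inl x) (kochCorner (g+1) q.1 q.2)
        = 4 * (∑ q : KochT g × Fin 3, D g x (kochCorner g q.1 q.2)) + 6 * 4 ^ g := by
      rw [Fintype.sum_prod_type, sumT g
        (fun t => ∑ c : Fin 3, D (g+1) (Sum.inl x) (kochCorner (g+1) t c))]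
      have hold : ∑ t : KochT g, ∑ c : Fin 3,
          D (g+1) (Sum.inl x) (kochCorner (g+1) (Sum.inl t) c)
          = ∑ q : KochT g × Fin 3, D g x (kochCorner g q.1 q.2) := by
        rw [Fintype.sum_prod_type]
        exact Finset.sum_congr rfl fun t _ => Finset.sum_congr rfl fun c _ => rfl
      have hnew : ∀ q : KochT g × Fin 3, ∑ c : Fin 3,
          D (g+1) (Sum.inl x) (kochCorner (g+1) (Sum.inr q) c)
          = 3 * D g x (kochCorner g q.1 q.2) + 2 := by
        rintro ⟨t, i⟩
        rw [Fin.sum_univ_three]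
        show D g x (kochCorner g t i) + (D g x (kochCorner g t i) + 1)
          + (D g x (kochCorner g t i) + 1) = _
        ring
      rw [hold, Finset.sum_congr rfl fun q _ => hnew q, Finset.sum_add_distrib,
        ← Finset.mul_sum, Finset.sum_const, Finset.card_univ, Fintype.card_prod, cardT,
        Fintype.card_fin, smul_eq_mul]
      ring
    constructor
    · rw [hV, hP, E_inl, nl_inl]
      zify at ih1 ih2 ⊢
      linear_combination ih1 + ih2
    · rw [hSt, E_inl, nl_inl]
      zify at ih2 ⊢
      linear_combination 4 * ih2
  | g+1, Sum.inr (t0, i0, j0) => by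
    obtain ⟨ih1, ih2⟩ := main g (kochCorner g t0 i0)
    have hFq : ∀ q : KochT g × Fin 3,
        (∑ j : Fin 2, D (g+1) (Sum.inr (t0, i0, j0)) (Sum.inr (q.1, q.2, j)))
          = if (t0, i0) = q then 1
            else 2 * D g (kochCorner g t0 i0) (kochCorner g q.1 q.2) + 4 := by
      rintro ⟨t, i⟩
      show (∑ j : Fin 2, D (g+1) (Sum.inr (t0, i0, j0)) (Sum.inr (t, i, j)))
        = if (t0, i0) = (t, i) then 1
          else 2 * D g (kochCorner g t0 i0) (kochCorner g t i) + 4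
      by_cases h : (t0, i0) = (t, i)
      · obtain ⟨rfl, rfl⟩ := Prod.mk.injEq .. ▸ h
        rw [if_pos rfl, Fin.sum_univ_two]
        have hD : ∀ j : Fin 2, D (g+1) (Sum.inr (t0, i0, j0)) (Sum.inr (t0, i0, j))
            = if j0 = j then 0 else 1 := by intro j; simp [D]
        rw [hD, hD]
        fin_cases j0 <;> decide
      · rw [if_neg h, Fin.sum_univ_two]
        have hD : ∀ j : Fin 2, D (g+1) (Sum.inr (t0, i0, j0)) (Sum.inr (t, i, j))
            = D g (kochCorner g t0 i0) (kochCorner g t i) + 2 := by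
          intro j; simp [D, h]
        rw [hD, hD]
        ring
    have hPair : (∑ q : KochT g × Fin 3,
          ∑ j : Fin 2, D (g+1) (Sum.inr (t0, i0, j0)) (Sum.inr (q.1, q.2, j))) + 3
        = 2 * (∑ q : KochT g × Fin 3,
            D g (kochCorner g t0 i0) (kochCorner g q.1 q.2)) + 12 * 4 ^ g := by
      have h1 := pair_sum
        (fun q : KochT g × Fin 3 => 2 * D g (kochCorner g t0 i0) (kochCorner g q.1 q.2))
        (t0, i0) (by simp [D_self])
        (fun q => ∑ j : Fin 2, D (g+1) (Sum.inr (t0, i0, j0)) (Sum.inr (q.1, q.2, j))) hFq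
      rw [h1, Finset.sum_add_distrib, ← Finset.mul_sum, Finset.sum_const, Finset.card_univ,
        Fintype.card_prod, cardT, Fintype.card_fin, smul_eq_mul]
      ring
    have hV : ∑ y : KochV (g+1), D (g+1) (Sum.inr (t0, i0, j0)) y
        = ((∑ y : KochV g, D g (kochCorner g t0 i0) y) + (2 * 4 ^ g + 1))
          + ∑ q : KochT g × Fin 3,
              ∑ j : Fin 2, D (g+1) (Sum.inr (t0, i0, j0)) (Sum.inr (q.1, q.2, j)) := by
      rw [sumV]
      congr 1
      · have h3 : ∀ y : KochV g,
            D (g+1) (Sum.inr (t0, i0, j0)) (Sum.inl y) = D g (kochCorner g t0 i0) y + 1 :=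
          fun y => rfl
        rw [Finset.sum_congr rfl fun y _ => h3 y, Finset.sum_add_distrib,
          Finset.sum_const, Finset.card_univ, cardV, smul_eq_mul, mul_one]
      · rw [sum_prod_assoc
          (fun t i j => D (g+1) (Sum.inr (t0, i0, j0)) (Sum.inr (t, i, j)))]
    have hSt : ∑ q : KochT (g+1) × Fin 3,
          D (g+1) (Sum.inr (t0, i0, j0)) (kochCorner (g+1) q.1 q.2)
        = ((2 * (∑ q : KochT g × Fin 3,
              D g (kochCorner g t0 i0) (kochCorner g q.1 q.2)) + 6 * 4 ^ g)
          + ∑ q : KochT g × Fin 3,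
              ∑ j : Fin 2, D (g+1) (Sum.inr (t0, i0, j0)) (Sum.inr (q.1, q.2, j))) := by
      rw [Fintype.sum_prod_type, sumT g
        (fun t => ∑ c : Fin 3, D (g+1) (Sum.inr (t0, i0, j0)) (kochCorner (g+1) t c))]
      have hold : ∑ t : KochT g, ∑ c : Fin 3,
          D (g+1) (Sum.inr (t0, i0, j0)) (kochCorner (g+1) (Sum.inl t) c)
          = (∑ q : KochT g × Fin 3, D g (kochCorner g t0 i0) (kochCorner g q.1 q.2))
            + 3 * 4 ^ g := by
        have h4 : ∑ t : KochT g, ∑ c : Fin 3,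
            D (g+1) (Sum.inr (t0, i0, j0)) (kochCorner (g+1) (Sum.inl t) c)
            = ∑ q : KochT g × Fin 3,
                (D g (kochCorner g t0 i0) (kochCorner g q.1 q.2) + 1) := by
          rw [Fintype.sum_prod_type]
          exact Finset.sum_congr rfl fun t _ => Finset.sum_congr rfl fun c _ => rfl
        rw [h4, Finset.sum_add_distrib, Finset.sum_const, Finset.card_univ,
          Fintype.card_prod, cardT, Fintype.card_fin, smul_eq_mul, mul_one]
        ring
      have hnew : ∀ q : KochT g × Fin 3, ∑ c : Fin 3,
          D (g+1) (Sum.inr (t0, i0, j0)) (kochCorner (g+1) (Sum.inr q) c)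
          = (D g (kochCorner g t0 i0) (kochCorner g q.1 q.2) + 1)
            + ∑ j : Fin 2, D (g+1) (Sum.inr (t0, i0, j0)) (Sum.inr (q.1, q.2, j)) := by
        rintro ⟨t, i⟩
        rw [Fin.sum_univ_three, Fin.sum_univ_two]
        show (D g (kochCorner g t0 i0) (kochCorner g t i) + 1)
            + D (g+1) (Sum.inr (t0, i0, j0)) (Sum.inr (t, i, 0))
            + D (g+1) (Sum.inr (t0, i0, j0)) (Sum.inr (t, i, 1))
          = (D g (kochCorner g t0 i0) (kochCorner g t i) + 1)
            + (D (g+1) (Sum.inr (t0, i0, j0)) (Sum.inr (t, i, 0))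
              + D (g+1) (Sum.inr (t0, i0, j0)) (Sum.inr (t, i, 1)))
        exact add_assoc _ _ _
      rw [hold, Finset.sum_congr rfl fun q _ => hnew q, Finset.sum_add_distrib,
        Finset.sum_add_distrib, Finset.sum_const, Finset.card_univ,
        Fintype.card_prod, cardT, Fintype.card_fin, smul_eq_mul, mul_one]
      ring
    constructor
    · rw [hV, E_inr, nl_inr]
      zify at ih1 ih2 hPair ⊢
      linear_combination ih1 + ih2 + hPair
    · rw [hSt, E_inr, nl_inr]
      zify at ih2 hPair ⊢
      linear_combination 4 * ih2 + 2 * hPair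

end KochAux

/-- For a node `x` of the Koch network `K_g` with label `{0, i_1, …, i_n}`, the sum
of shortest-path distances from `x` to all nodes equals
`d_x(g) = (g+2)·4^g + 2n·4^g - Σ_{k=1}^{n} 2·4^{g-i_k}`. -/
theorem stmt_12 (g : ℕ) (x : KochV g) :
    ∑ y : KochV g, (kochGraph g).dist x y =
      (g + 2) * 4 ^ g + 2 * (kochLabel g x).tail.length * 4 ^ g -
        ((kochLabel g x).tail.map (fun i => 2 * 4 ^ (g - i))).sum := by
  have h := (KochAux.main g x).1
  have hmap : ((kochLabel g x).tail.map (fun i => 2 * 4 ^ (g - i))).sum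
      = 2 * KochAux.E g x := by
    rw [KochAux.E, ← List.sum_map_mul_left]
  have hd : ∑ y : KochV g, (kochGraph g).dist x y = ∑ y : KochV g, KochAux.D g x y :=
    Finset.sum_congr rfl fun y _ => KochAux.dist_eq_D g x y
  rw [hd, hmap]
  have hrhs : (g + 2 + 2 * KochAux.nl g x) * 4 ^ g
      = (g + 2) * 4 ^ g + 2 * (kochLabel g x).tail.length * 4 ^ g := by
    rw [KochAux.nl]; ring
  rw [hrhs] at h
  exact (Nat.sub_eq_of_eq_add h.symm).symm
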